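/- Let G be a finite simple graph, v a vertex of G, and G' = G − v the induced subgraph obtained by deleting v and all edges incident to v. Let σ be a Scarf face of I(G') and let w_1, …, w_t (t ≥ 1) be distinct elements of N_G(v). Suppose dist_G(σ, vw_i) = 0 for some 1 ≤ i ≤ t, and dist_G(e, vw_j) ≠ 1 for every e ∈ σ and every 1 ≤ j ≤ t. Then σ ∪ {vw_1, …, vw_t} is a Scarf face of I(G) if and only if t = 1 and N_σ(w_1) ∩ N_G(v) = ∅. -/

import Mathlib

/-- The monomial (exponent vector) of an edge: `1` on its endpoints, `0` elsewhere. -/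
def edgeMon {V : Type*} [DecidableEq V] (e : Sym2 V) : V → ℕ :=
  fun x => if x ∈ e then 1 else 0

/-- The lcm (componentwise max) of the monomials of a finite set of edges. -/
def eLcm {V : Type*} [DecidableEq V] (σ : Finset (Sym2 V)) : V → ℕ :=
  σ.sup edgeMon

/-- `σ` is a Scarf face of the edge ideal `I(G)`, identified with a set of edges of `G`:
its lcm is distinct from the lcm of any other set of edges of `G`. -/
def IsScarf {V : Type*} [DecidableEq V] (G : SimpleGraph V) (σ : Finset (Sym2 V)) : Prop :=
  (∀ e ∈ σ, e ∈ G.edgeSet) ∧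
    ∀ τ : Finset (Sym2 V), (∀ e ∈ τ, e ∈ G.edgeSet) → eLcm τ = eLcm σ → τ = σ

/-- `dist_G(e, f) = 0`: the two edges share a vertex. -/
def Dist0 {V : Type*} (e f : Sym2 V) : Prop := ∃ x, x ∈ e ∧ x ∈ f

/-- `dist_G(e, f) = 1`: the edges are vertex-disjoint, but some endpoint of `e` is
adjacent in `G` to some endpoint of `f`. -/
def Dist1 {V : Type*} (G : SimpleGraph V) (e f : Sym2 V) : Prop :=
  ¬ Dist0 e f ∧ ∃ x ∈ e, ∃ y ∈ f, G.Adj x y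

/-- The graph `G - v`: delete the vertex `v`, i.e. all edges incident to `v`
(keeping the vertex set). -/
def delVert {V : Type*} (G : SimpleGraph V) (v : V) : SimpleGraph V where
  Adj x y := G.Adj x y ∧ x ≠ v ∧ y ≠ v
  symm := ⟨fun x y h => ⟨h.1.symm, h.2.2, h.2.1⟩⟩
  loopless := ⟨fun x h => G.loopless.irrefl x h.1⟩

private lemma eLcm_apply' {V : Type*} [DecidableEq V] (σ : Finset (Sym2 V)) (x : V) :
    eLcm σ x = σ.sup (fun e => edgeMon e x) := Finset.sup_apply σ edgeMon x

private lemma cov_iff_eLcm {V : Type*} [DecidableEq V] (σ : Finset (Sym2 V)) (x : V) :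
    (∃ e ∈ σ, x ∈ e) ↔ eLcm σ x ≠ 0 := by
  rw [eLcm_apply']
  constructor
  · rintro ⟨e, he, hx⟩ h0
    have hle : edgeMon e x ≤ 0 := h0 ▸ Finset.le_sup (f := fun e => edgeMon e x) he
    simp [edgeMon, hx] at hle
  · intro hne
    by_contra hc
    push_neg at hc
    apply hne
    apply Nat.le_zero.mp
    apply Finset.sup_le
    intro e he
    simp [edgeMon, hc e he]

private lemma eLcm_le_one {V : Type*} [DecidableEq V] (σ : Finset (Sym2 V)) (x : V) :
    eLcm σ x ≤ 1 := by
  rw [eLcm_apply']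
  apply Finset.sup_le
  intro e _
  simp only [edgeMon]
  split <;> omega

private lemma eLcm_eq_iff {V : Type*} [DecidableEq V] (τ σ : Finset (Sym2 V)) :
    eLcm τ = eLcm σ ↔ ∀ x, ((∃ e ∈ τ, x ∈ e) ↔ (∃ e ∈ σ, x ∈ e)) := by
  constructor
  · intro h x
    rw [cov_iff_eLcm, cov_iff_eLcm, h]
  · intro h
    funext x
    have hτ := cov_iff_eLcm τ x
    have hσ := cov_iff_eLcm σ x
    have l1 := eLcm_le_one τ x
    have l2 := eLcm_le_one σ x
    by_cases hc : ∃ e ∈ σ, x ∈ e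
    · have h1 := hσ.mp hc
      have h2 := hτ.mp ((h x).mpr hc)
      omega
    · have h1 : eLcm σ x = 0 := by by_contra hh; exact hc (hσ.mpr hh)
      have h2 : eLcm τ x = 0 := by
        by_contra hh; exact hc ((h x).mp (hτ.mpr hh))
      omega

private lemma delVert_edge {V : Type*} (G : SimpleGraph V) (v : V) {e : Sym2 V}
    (he : e ∈ (delVert G v).edgeSet) : e ∈ G.edgeSet ∧ v ∉ e := by
  induction e using Sym2.ind with
  | _ a b =>
    obtain ⟨h1, h2, h3⟩ : G.Adj a b ∧ a ≠ v ∧ b ≠ v := he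
    refine ⟨h1, ?_⟩
    rw [Sym2.mem_iff]
    rintro (rfl | rfl)
    · exact h2 rfl
    · exact h3 rfl

private lemma delVert_edge' {V : Type*} (G : SimpleGraph V) (v : V) {e : Sym2 V}
    (he : e ∈ G.edgeSet) (hv : v ∉ e) : e ∈ (delVert G v).edgeSet := by
  induction e using Sym2.ind with
  | _ a b =>
    rw [Sym2.mem_iff] at hv
    push_neg at hv
    exact ⟨he, fun h => hv.1 h.symm, fun h => hv.2 h.symm⟩

theorem stmt9 {V : Type*} [Fintype V] [DecidableEq V] (G : SimpleGraph V) (v : V)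
    (W : Finset V) (hW : ∀ w ∈ W, G.Adj v w) (hWne : W.Nonempty)
    (σ : Finset (Sym2 V)) (hσ : IsScarf (delVert G v) σ)
    (h0 : ∃ w ∈ W, ∃ e ∈ σ, Dist0 e s(v, w))
    (h1 : ∀ e ∈ σ, ∀ w ∈ W, ¬ Dist1 G e s(v, w)) :
    IsScarf G (σ ∪ W.image (fun w => s(v, w))) ↔
      ∃ w, W = {w} ∧ {x : V | s(x, w) ∈ σ} ∩ G.neighborSet v = ∅ := by
  classical
  -- basic facts about σ's edges
  have hσE : ∀ e ∈ σ, e ∈ G.edgeSet ∧ v ∉ e := fun e he => delVert_edge G v (hσ.1 e he)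
  -- the distinguished w₀ ∈ W covered by σ
  obtain ⟨w₀, hw₀W, e₀, he₀, x₀, hx₀e, hx₀vw⟩ := h0
  have hw₀e₀ : w₀ ∈ e₀ := by
    rw [Sym2.mem_iff] at hx₀vw
    rcases hx₀vw with rfl | rfl
    · exact absurd hx₀e (hσE e₀ he₀).2
    · exact hx₀e
  -- key consequence of h1
  have key : ∀ e ∈ σ, ∀ w ∈ W, ∀ x ∈ e, (G.Adj x v ∨ G.Adj x w) → w ∈ e := by
    intro e he w hw x hxe hadj
    by_contra hwne
    refine h1 e he w hw ⟨?_, ?_⟩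
    · rintro ⟨y, hy, hy'⟩
      rw [Sym2.mem_iff] at hy'
      rcases hy' with rfl | rfl
      · exact (hσE e he).2 hy
      · exact hwne hy
    · rcases hadj with h | h
      · exact ⟨x, hxe, v, Sym2.mem_mk_left v w, h⟩
      · exact ⟨x, hxe, w, Sym2.mem_mk_right v w, h⟩
  set σ' := σ ∪ W.image (fun w => s(v, w)) with hσ'def
  have hvW : ∀ w ∈ W, v ≠ w := fun w hw => (hW w hw).ne
  have hsvw_not_σ : ∀ w : V, s(v, w) ∉ σ := by
    intro w hc
    exact (hσE _ hc).2 (Sym2.mem_mk_left v w)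
  -- cover of σ'
  have covσ' : ∀ x, (∃ e ∈ σ', x ∈ e) ↔ ((∃ e ∈ σ, x ∈ e) ∨ x = v ∨ x ∈ W) := by
    intro x
    constructor
    · rintro ⟨e, he, hxe⟩
      rw [Finset.mem_union] at he
      rcases he with he | he
      · exact Or.inl ⟨e, he, hxe⟩
      · obtain ⟨w, hw, rfl⟩ := Finset.mem_image.mp he
        rw [Sym2.mem_iff] at hxe
        rcases hxe with rfl | rfl
        · exact Or.inr (Or.inl rfl)
        · exact Or.inr (Or.inr hw)
    · rintro (⟨e, he, hxe⟩ | rfl | hxW)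
      · exact ⟨e, Finset.mem_union_left _ he, hxe⟩
      · obtain ⟨w, hw⟩ := hWne
        exact ⟨s(x, w), Finset.mem_union_right _ (Finset.mem_image_of_mem _ hw),
          Sym2.mem_mk_left x w⟩
      · exact ⟨s(v, x), Finset.mem_union_right _ (Finset.mem_image_of_mem _ hxW),
          Sym2.mem_mk_right v x⟩
  constructor
  · -- forward direction
    intro hS
    -- Step 1: W = {w₀}
    have hWone : W = {w₀} := by
      by_contra hne
      obtain ⟨w₁, hw₁W, hne01⟩ : ∃ w₁ ∈ W, w₁ ≠ w₀ := by
        by_contra hc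
        push_neg at hc
        exact hne (Finset.eq_singleton_iff_unique_mem.mpr ⟨hw₀W, hc⟩)
      set τ := σ ∪ (W.erase w₀).image (fun w => s(v, w)) with hτdef
      have hτE : ∀ e ∈ τ, e ∈ G.edgeSet := by
        intro e he
        rw [Finset.mem_union] at he
        rcases he with he | he
        · exact (hσE e he).1
        · obtain ⟨w, hw, rfl⟩ := Finset.mem_image.mp he
          exact hW w (Finset.mem_of_mem_erase hw)
      have hlcm : eLcm τ = eLcm σ' := by
        rw [eLcm_eq_iff]
        intro x
        rw [covσ' x]
        constructor
        · rintro ⟨e, he, hxe⟩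
          rw [Finset.mem_union] at he
          rcases he with he | he
          · exact Or.inl ⟨e, he, hxe⟩
          · obtain ⟨w, hw, rfl⟩ := Finset.mem_image.mp he
            rw [Sym2.mem_iff] at hxe
            rcases hxe with rfl | rfl
            · exact Or.inr (Or.inl rfl)
            · exact Or.inr (Or.inr (Finset.mem_of_mem_erase hw))
        · rintro (⟨e, he, hxe⟩ | rfl | hxW)
          · exact ⟨e, Finset.mem_union_left _ he, hxe⟩
          · exact ⟨s(x, w₁), Finset.mem_union_right _
              (Finset.mem_image_of_mem _ (Finset.mem_erase.mpr ⟨hne01, hw₁W⟩)),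
              Sym2.mem_mk_left x w₁⟩
          · by_cases hx0 : x = w₀
            · subst hx0
              exact ⟨e₀, Finset.mem_union_left _ he₀, hw₀e₀⟩
            · exact ⟨s(v, x), Finset.mem_union_right _
                (Finset.mem_image_of_mem _ (Finset.mem_erase.mpr ⟨hx0, hxW⟩)),
                Sym2.mem_mk_right v x⟩
      have hτσ' := hS.2 τ hτE hlcm
      -- but s(v, w₀) ∈ σ' and s(v, w₀) ∉ τ
      have h1' : s(v, w₀) ∈ σ' :=
        Finset.mem_union_right _ (Finset.mem_image_of_mem _ hw₀W)
      rw [← hτσ'] at h1'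
      rw [hτdef, Finset.mem_union] at h1'
      rcases h1' with h1' | h1'
      · exact hsvw_not_σ w₀ h1'
      · obtain ⟨w, hw, heq⟩ := Finset.mem_image.mp h1'
        rw [Sym2.eq_iff] at heq
        rcases heq with ⟨_, rfl⟩ | ⟨hvw, _⟩
        · exact (Finset.mem_erase.mp hw).1 rfl
        · exact hvW w₀ hw₀W hvw
    -- Step 2: the neighborhood condition
    refine ⟨w₀, hWone, ?_⟩
    rw [Set.eq_empty_iff_forall_notMem]
    rintro x ⟨hxσ, hxN⟩
    simp only [Set.mem_setOf_eq] at hxσ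
    have hxv : G.Adj v x := hxN
    have hxw₀ : G.Adj x w₀ := ((hσE _ hxσ).1 : G.Adj x w₀)
    set τ := σ ∪ {s(v, x)} with hτdef
    have hτE : ∀ e ∈ τ, e ∈ G.edgeSet := by
      intro e he
      rw [Finset.mem_union, Finset.mem_singleton] at he
      rcases he with he | rfl
      · exact (hσE e he).1
      · exact hxv
    have hlcm : eLcm τ = eLcm σ' := by
      rw [eLcm_eq_iff]
      intro y
      rw [covσ' y, hWone]
      constructor
      · rintro ⟨e, he, hye⟩
        rw [Finset.mem_union, Finset.mem_singleton] at he
        rcases he with he | rfl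
        · exact Or.inl ⟨e, he, hye⟩
        · rw [Sym2.mem_iff] at hye
          rcases hye with rfl | rfl
          · exact Or.inr (Or.inl rfl)
          · exact Or.inl ⟨_, hxσ, Sym2.mem_mk_left y w₀⟩
      · rintro (⟨e, he, hye⟩ | rfl | hyW)
        · exact ⟨e, Finset.mem_union_left _ he, hye⟩
        · exact ⟨s(y, x), Finset.mem_union_right _ (Finset.mem_singleton_self _),
            Sym2.mem_mk_left y x⟩
        · rw [Finset.mem_singleton] at hyW
          subst hyW
          exact ⟨e₀, Finset.mem_union_left _ he₀, hw₀e₀⟩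
    have hτσ' := hS.2 τ hτE hlcm
    have h1' : s(v, w₀) ∈ σ' :=
      Finset.mem_union_right _ (Finset.mem_image_of_mem _ hw₀W)
    rw [← hτσ', hτdef, Finset.mem_union, Finset.mem_singleton] at h1'
    rcases h1' with h1' | h1'
    · exact hsvw_not_σ w₀ h1'
    · rw [Sym2.eq_iff] at h1'
      rcases h1' with ⟨_, hw⟩ | ⟨hvx, _⟩
      · exact hxw₀.ne (hw.symm)
      · exact hxv.ne' hvx.symm
  · -- backward direction
    rintro ⟨w, hWeq, hNs⟩
    subst hWeq
    rw [Finset.mem_singleton] at hw₀W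
    subst hw₀W
    have hNs' : ∀ x, s(x, w₀) ∈ σ → ¬ G.Adj v x := by
      intro x hx hadj
      exact Set.eq_empty_iff_forall_notMem.mp hNs x ⟨hx, hadj⟩
    have hσ'eq : σ' = σ ∪ {s(v, w₀)} := by
      rw [hσ'def, Finset.image_singleton]
    constructor
    · intro e he
      rw [hσ'eq, Finset.mem_union, Finset.mem_singleton] at he
      rcases he with he | rfl
      · exact (hσE e he).1
      · exact hW w₀ (Finset.mem_singleton_self _)
    · intro τ hτE hlcm
      rw [eLcm_eq_iff] at hlcm
      -- cover of τ = cover σ ∪ {v}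
      have covτ : ∀ x, (∃ e ∈ τ, x ∈ e) ↔ ((∃ e ∈ σ, x ∈ e) ∨ x = v) := by
        intro x
        rw [hlcm x, covσ' x]
        constructor
        · rintro (h | rfl | hxW)
          · exact Or.inl h
          · exact Or.inr rfl
          · rw [Finset.mem_singleton] at hxW
            subst hxW
            exact Or.inl ⟨e₀, he₀, hw₀e₀⟩
        · rintro (h | rfl)
          · exact Or.inl h
          · exact Or.inr (Or.inl rfl)
      -- every edge of τ through v equals s(v, w₀)
      have hvedge : ∀ e ∈ τ, v ∈ e → e = s(v, w₀) := by
        intro e he hve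
        induction e using Sym2.ind with
        | _ a b =>
          have hab : G.Adj a b := hτE _ he
          rw [Sym2.mem_iff] at hve
          -- wlog via both cases
          have main : ∀ u : V, G.Adj v u → s(v, u) ∈ τ → s(v, u) = s(v, w₀) := by
            intro u hadj hmem
            have huτ : ∃ f ∈ τ, u ∈ f := ⟨s(v, u), hmem, Sym2.mem_mk_right v u⟩
            have := (covτ u).mp huτ
            rcases this with ⟨f, hf, huf⟩ | rfl
            · have hwf : w₀ ∈ f := key f hf w₀ (Finset.mem_singleton_self _) u huf
                (Or.inl hadj.symm)
              by_cases huw : u = w₀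
              · subst huw; rfl
              · exfalso
                have hfeq : f = s(u, w₀) := (Sym2.mem_and_mem_iff huw).mp ⟨huf, hwf⟩
                rw [hfeq] at hf
                exact hNs' u hf hadj
            · exact absurd rfl hadj.ne
          rcases hve with rfl | rfl
          · exact main b hab he
          · have h2 : s(v, a) ∈ τ := by rwa [Sym2.eq_swap]
            rw [Sym2.eq_swap]
            exact main a hab.symm h2
      -- τ₀ : edges of τ avoiding v
      set τ₀ := τ.filter (fun e => v ∉ e) with hτ₀def
      have hτ₀E : ∀ e ∈ τ₀, e ∈ (delVert G v).edgeSet := by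
        intro e he
        rw [hτ₀def, Finset.mem_filter] at he
        exact delVert_edge' G v (hτE e he.1) he.2
      have covτ₀_sub : ∀ x, (∃ e ∈ τ₀, x ∈ e) → (∃ e ∈ σ, x ∈ e) := by
        rintro x ⟨e, he, hxe⟩
        rw [hτ₀def, Finset.mem_filter] at he
        rcases (covτ x).mp ⟨e, he.1, hxe⟩ with h | rfl
        · exact h
        · exact absurd hxe he.2
      -- w₀ is covered by τ₀
      have hw₀τ₀ : ∃ e ∈ τ₀, w₀ ∈ e := by
        by_contra hw₀n
        -- then Cov τ₀ = Cov σ \ {w₀}; use ρ = τ₀ ∪ {e₀}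
        have covτ₀ : ∀ x, (∃ e ∈ τ₀, x ∈ e) ↔ ((∃ e ∈ σ, x ∈ e) ∧ x ≠ w₀) := by
          intro x
          constructor
          · intro h
            refine ⟨covτ₀_sub x h, ?_⟩
            rintro rfl
            exact hw₀n h
          · rintro ⟨⟨e, he, hxe⟩, hxw⟩
            have hxτ : ∃ f ∈ τ, x ∈ f := (covτ x).mpr (Or.inl ⟨e, he, hxe⟩)
            obtain ⟨f, hf, hxf⟩ := hxτ
            by_cases hvf : v ∈ f
            · exfalso
              have := hvedge f hf hvf
              subst this
              rw [Sym2.mem_iff] at hxf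
              rcases hxf with rfl | rfl
              · exact (hσE e he).2 hxe
              · exact hxw rfl
            · exact ⟨f, Finset.mem_filter.mpr ⟨hf, hvf⟩, hxf⟩
        set ρ := τ₀ ∪ {e₀} with hρdef
        have hρE : ∀ e ∈ ρ, e ∈ (delVert G v).edgeSet := by
          intro e he
          rw [hρdef, Finset.mem_union, Finset.mem_singleton] at he
          rcases he with he | he'
          · exact hτ₀E e he
          · rw [he']; exact hσ.1 e₀ he₀
        have hρlcm : eLcm ρ = eLcm σ := by
          rw [eLcm_eq_iff]
          intro x
          constructor
          · rintro ⟨e, he, hxe⟩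
            rw [hρdef, Finset.mem_union, Finset.mem_singleton] at he
            rcases he with he | he'
            · exact covτ₀_sub x ⟨e, he, hxe⟩
            · exact ⟨e₀, he₀, he' ▸ hxe⟩
          · rintro ⟨e, he, hxe⟩
            by_cases hxw : x = w₀
            · subst hxw
              exact ⟨e₀, Finset.mem_union_right _ (Finset.mem_singleton_self _), hw₀e₀⟩
            · obtain ⟨f, hf, hxf⟩ := (covτ₀ x).mpr ⟨⟨e, he, hxe⟩, hxw⟩
              exact ⟨f, Finset.mem_union_left _ hf, hxf⟩
        have hρσ := hσ.2 ρ hρE hρlcm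
        -- e₀ = s(x₁, w₀); x₁ covered by τ₀, its covering edge f contains w₀ → contradiction
        obtain ⟨x₁, hx₁⟩ : ∃ x₁, e₀ = s(x₁, w₀) := by
          exact ⟨Sym2.Mem.other hw₀e₀, (Sym2.other_spec hw₀e₀).symm.trans Sym2.eq_swap⟩
        have hx₁w₀ : G.Adj x₁ w₀ := by
          have := (hσE e₀ he₀).1
          rw [hx₁] at this
          exact this
        have hx₁cov : ∃ e ∈ σ, x₁ ∈ e := ⟨e₀, he₀, hx₁ ▸ Sym2.mem_mk_left x₁ w₀⟩
        obtain ⟨f, hf, hx₁f⟩ := (covτ₀ x₁).mpr ⟨hx₁cov, hx₁w₀.ne⟩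
        -- f ∈ τ₀ ⊆ ρ = σ, so key applies
        have hfσ : f ∈ σ := by
          rw [← hρσ, hρdef]
          exact Finset.mem_union_left _ hf
        have hwf : w₀ ∈ f := key f hfσ w₀ (Finset.mem_singleton_self _) x₁ hx₁f
          (Or.inr hx₁w₀)
        exact hw₀n ⟨f, hf, hwf⟩
      -- now Cov τ₀ = Cov σ, hence τ₀ = σ
      have covτ₀' : ∀ x, (∃ e ∈ τ₀, x ∈ e) ↔ (∃ e ∈ σ, x ∈ e) := by
        intro x
        refine ⟨covτ₀_sub x, ?_⟩
        rintro ⟨e, he, hxe⟩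
        by_cases hxw : x = w₀
        · subst hxw; exact hw₀τ₀
        · have hxτ : ∃ f ∈ τ, x ∈ f := (covτ x).mpr (Or.inl ⟨e, he, hxe⟩)
          obtain ⟨f, hf, hxf⟩ := hxτ
          by_cases hvf : v ∈ f
          · exfalso
            have := hvedge f hf hvf
            subst this
            rw [Sym2.mem_iff] at hxf
            rcases hxf with rfl | rfl
            · exact (hσE e he).2 hxe
            · exact hxw rfl
          · exact ⟨f, Finset.mem_filter.mpr ⟨hf, hvf⟩, hxf⟩
      have hτ₀σ : τ₀ = σ := hσ.2 τ₀ hτ₀E ((eLcm_eq_iff τ₀ σ).mpr covτ₀')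
      -- s(v, w₀) ∈ τ
      have hvτ : s(v, w₀) ∈ τ := by
        have hvcov : ∃ e ∈ τ, v ∈ e := (covτ v).mpr (Or.inr rfl)
        obtain ⟨e, he, hve⟩ := hvcov
        have := hvedge e he hve
        subst this
        exact he
      -- conclude τ = σ'
      rw [hσ'eq]
      apply Finset.ext
      intro e
      rw [Finset.mem_union, Finset.mem_singleton]
      constructor
      · intro he
        by_cases hve : v ∈ e
        · exact Or.inr (hvedge e he hve)
        · exact Or.inl (hτ₀σ ▸ Finset.mem_filter.mpr ⟨he, hve⟩)
      · rintro (he | rfl)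
        · rw [← hτ₀σ, hτ₀def, Finset.mem_filter] at he
          exact he.1
        · exact hvτ
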